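/- Let a₁ and a₂ be coprime positive integers, let S = {μ₁a₁ + μ₂a₂ : μ₁, μ₂ ∈ ℕ} be the numerical semigroup they generate, and let f(S;X) = ∑_{m ∈ S} X^m be its generating power series. Then (1 − X^{a₁})·(1 − X^{a₂})·f(S;X) = 1 − X^{a₁a₂} in the ring ℤ[[X]] of formal power series. -/

import Mathlib

open scoped Classical in
theorem stmt_0 (a₁ a₂ : ℕ) (h₁ : 0 < a₁) (h₂ : 0 < a₂) (hcop : Nat.Coprime a₁ a₂)
    (f : PowerSeries ℤ)
    (hf : ∀ m : ℕ, PowerSeries.coeff m f =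
      if ∃ μ₁ μ₂ : ℕ, m = μ₁ * a₁ + μ₂ * a₂ then 1 else 0) :
    (1 - PowerSeries.X ^ a₁) * (1 - PowerSeries.X ^ a₂) * f
      = 1 - PowerSeries.X ^ (a₁ * a₂) := by
  -- key step: (1 - X^a₂) * f = ∑_{i<a₂} (X^a₁)^i
  have key : (1 - PowerSeries.X ^ a₂) * f
      = ∑ i ∈ Finset.range a₂, (PowerSeries.X (R := ℤ) ^ a₁) ^ i := by
    ext n
    rw [sub_mul, one_mul, map_sub, hf, PowerSeries.coeff_X_pow_mul', map_sum]
    have hsum : ∀ i ∈ Finset.range a₂,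
        (PowerSeries.coeff n) ((PowerSeries.X (R := ℤ) ^ a₁) ^ i)
          = if n = i * a₁ then 1 else 0 := by
      intro i _
      rw [← pow_mul, PowerSeries.coeff_X_pow, mul_comm a₁ i]
    rw [Finset.sum_congr rfl hsum]
    -- uniqueness of i with n = i * a₁, i < a₂
    have huniq : ∀ i j, i < a₂ → j < a₂ → n = i * a₁ → n = j * a₁ → i = j := by
      intro i j _ _ hi hj
      exact Nat.eq_of_mul_eq_mul_right h₁ (hi ▸ hj)
    by_cases hex : ∃ i, i < a₂ ∧ n = i * a₁
    · obtain ⟨i, hia, hin⟩ := hex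
      have hsum1 : (∑ j ∈ Finset.range a₂, if n = j * a₁ then (1:ℤ) else 0) = 1 := by
        rw [Finset.sum_eq_single i]
        · simp [hin]
        · intro j hj hji
          rw [if_neg]
          intro hnj
          exact hji (huniq j i (Finset.mem_range.mp hj) hia hnj hin)
        · intro h; exact absurd (Finset.mem_range.mpr hia) h
      rw [hsum1]
      -- LHS: n ∈ S, and n - a₂ ∉ S
      have hmem : (if ∃ μ₁ μ₂ : ℕ, n = μ₁ * a₁ + μ₂ * a₂ then (1:ℤ) else 0) = 1 := by
        rw [if_pos ⟨i, 0, by omega⟩]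
      rw [hmem]
      by_cases hle : a₂ ≤ n
      · rw [if_pos hle, hf]
        rw [if_neg]
        · ring
        rintro ⟨μ₁, μ₂, hm⟩
        -- i * a₁ = μ₁ * a₁ + (μ₂+1) * a₂
        have hx : (μ₂ + 1) * a₂ = μ₂ * a₂ + a₂ := by ring
        have heq : i * a₁ = μ₁ * a₁ + (μ₂ + 1) * a₂ := by omega
        have hgt : μ₁ < i := by nlinarith
        have hdvd : a₂ ∣ (i - μ₁) * a₁ := ⟨μ₂ + 1, by
          have h5 : (i - μ₁) * a₁ = i * a₁ - μ₁ * a₁ := by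
            rw [Nat.sub_mul]
          have h6 : a₂ * (μ₂ + 1) = μ₂ * a₂ + a₂ := by ring
          omega⟩
        have hdvd2 : a₂ ∣ i - μ₁ := (Nat.Coprime.dvd_of_dvd_mul_right
          (Nat.Coprime.symm hcop) hdvd)
        have := Nat.le_of_dvd (by omega) hdvd2
        omega
      · rw [if_neg hle]; ring
    · have hsum0 : (∑ j ∈ Finset.range a₂, if n = j * a₁ then (1:ℤ) else 0) = 0 := by
        apply Finset.sum_eq_zero
        intro j hj
        rw [if_neg]
        intro hnj
        exact hex ⟨j, Finset.mem_range.mp hj, hnj⟩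
      rw [hsum0]
      by_cases hle : a₂ ≤ n
      · rw [if_pos hle, hf]
        by_cases hS : ∃ μ₁ μ₂ : ℕ, n = μ₁ * a₁ + μ₂ * a₂
        · obtain ⟨μ₁, μ₂, hm⟩ := hS
          rw [if_pos ⟨μ₁, μ₂, hm⟩]
          -- show n - a₂ ∈ S
          rw [if_pos, sub_self]
          rcases Nat.eq_zero_or_pos μ₂ with hz | hp
          · -- μ₂ = 0, n = μ₁ * a₁, μ₁ ≥ a₂ since no small rep
            have h0 : μ₂ * a₂ = 0 := by rw [hz]; ring
            have hμ₁ : a₂ ≤ μ₁ := by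
              by_contra hlt
              exact hex ⟨μ₁, by omega, by omega⟩
            refine ⟨μ₁ - a₂, a₁ - 1, ?_⟩
            have h1 : (μ₁ - a₂) * a₁ = μ₁ * a₁ - a₂ * a₁ := by rw [Nat.sub_mul]
            have h2 : (a₁ - 1) * a₂ = a₁ * a₂ - a₂ := by rw [Nat.sub_mul]; omega
            have h3 : a₂ * a₁ ≤ μ₁ * a₁ := Nat.mul_le_mul_right a₁ hμ₁
            have h4 : a₁ * a₂ = a₂ * a₁ := by ring
            have h5 : a₂ ≤ a₂ * a₁ := Nat.le_mul_of_pos_right a₂ h₁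
            omega
          · exact ⟨μ₁, μ₂ - 1, by
              have h6 : (μ₂ - 1) * a₂ = μ₂ * a₂ - a₂ := by rw [Nat.sub_mul]; omega
              have h7 : a₂ ≤ μ₂ * a₂ := Nat.le_mul_of_pos_left a₂ hp
              omega⟩
        · rw [if_neg hS, if_neg, sub_self]
          rintro ⟨μ₁, μ₂, hm⟩
          have h8 : (μ₂ + 1) * a₂ = μ₂ * a₂ + a₂ := by ring
          exact hS ⟨μ₁, μ₂ + 1, by omega⟩
      · rw [if_neg hle, sub_zero, if_neg]
        rintro ⟨μ₁, μ₂, hm⟩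
        have h9 : μ₂ * a₂ ≤ n := by omega
        have hμ₂ : μ₂ = 0 := by
          rcases Nat.eq_zero_or_pos μ₂ with h | h
          · exact h
          · exact absurd (Nat.le_mul_of_pos_left a₂ h) (by omega)
        have h0 : μ₂ * a₂ = 0 := by rw [hμ₂]; ring
        have h10 : μ₁ ≤ μ₁ * a₁ := Nat.le_mul_of_pos_right μ₁ h₁
        exact hex ⟨μ₁, by omega, by omega⟩
  calc (1 - PowerSeries.X ^ a₁) * (1 - PowerSeries.X ^ a₂) * f
      = (1 - PowerSeries.X ^ a₁) * ((1 - PowerSeries.X ^ a₂) * f) := by ring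
    _ = (1 - PowerSeries.X ^ a₁) *
          ∑ i ∈ Finset.range a₂, (PowerSeries.X (R := ℤ) ^ a₁) ^ i := by rw [key]
    _ = 1 - (PowerSeries.X (R := ℤ) ^ a₁) ^ a₂ := mul_neg_geom_sum _ _
    _ = 1 - PowerSeries.X ^ (a₁ * a₂) := by rw [← pow_mul]
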